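/- Let (Ω, 𝔉, μ) be a probability space, γ > 0, δ ∈ (0,1), t₀ ≥ 1, and T ≥ 1. For each t let ρ̂_t, ρ_t, C_t : Ω → ℝ be measurable, set R_t = ρ̂_t − ρ_t, and define e_t(ω) = 1 if R_t(ω) > C_t(ω) and e_t(ω) = 0 otherwise. Let δ'_t : Ω → ℝ satisfy, for every ω, δ'_{t+1}(ω) = δ'_t(ω) + γ·(δ − e_t(ω)) for all t ≥ t₀, with δ'_{t₀}(ω) = δ, and suppose that for every t ≥ t₀ and every ω, δ'_t(ω) < 0 implies e_t(ω) = 0 and δ'_t(ω) > 1 implies e_t(ω) = 1. If moreover ρ̂_t(ω) > C_t(ω) for every t ∈ [t₀, t₀+T−1] and every ω, then 1 − δ − p₁ ≤ (1/T)·∑_{t=t₀}^{t₀+T−1} μ{ω : ρ_t(ω) > 0}, where p₁ = (δ + γ)/(T·γ). -/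

import Mathlib

open MeasureTheory

/-- Theorem 1: if the safety monitor predicts no violation at any time
(`ρ̂ t ω > C t ω` for all `t ∈ [t₀, t₀+T−1]` and all `ω`), then the time-averaged
probability that the system actually satisfies the safety specification (`ρ t > 0`)
is at least `1 − δ − p₁`, where `p₁ = (δ + γ)/(T·γ)`. -/
theorem acp_safety_guarantee
    {Ω : Type*} [MeasurableSpace Ω] (μ : Measure Ω) [IsProbabilityMeasure μ]
    (γ δ : ℝ) (hγ : 0 < γ) (hδ : δ ∈ Set.Ioo (0 : ℝ) 1)
    (t₀ T : ℕ) (ht₀ : 1 ≤ t₀) (hT : 1 ≤ T)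
    (ρhat ρ C : ℕ → Ω → ℝ)
    (hρhat : ∀ t, Measurable (ρhat t)) (hρ : ∀ t, Measurable (ρ t))
    (hC : ∀ t, Measurable (C t))
    (R : ℕ → Ω → ℝ) (hRdef : ∀ t ω, R t ω = ρhat t ω - ρ t ω)
    (e : ℕ → Ω → ℝ)
    (he : ∀ t ω, e t ω = if R t ω > C t ω then 1 else 0)
    (δ' : ℕ → Ω → ℝ)
    (hrec : ∀ t, t₀ ≤ t → ∀ ω, δ' (t + 1) ω = δ' t ω + γ * (δ - e t ω))
    (hinit : ∀ ω, δ' t₀ ω = δ)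
    (hlow : ∀ t, t₀ ≤ t → ∀ ω, δ' t ω < 0 → e t ω = 0)
    (hhigh : ∀ t, t₀ ≤ t → ∀ ω, δ' t ω > 1 → e t ω = 1)
    (hpred : ∀ t ∈ Finset.Icc t₀ (t₀ + T - 1), ∀ ω, ρhat t ω > C t ω) :
    1 - δ - (δ + γ) / ((T : ℝ) * γ) ≤
      (1 / (T : ℝ)) * ∑ t ∈ Finset.Icc t₀ (t₀ + T - 1), (μ {ω | ρ t ω > 0}).toReal := by
  obtain ⟨hδ0, hδ1⟩ := hδ
  have hTpos : (0 : ℝ) < T := by exact_mod_cast hT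
  have heb : ∀ t ω, 0 ≤ e t ω ∧ e t ω ≤ 1 := by
    intro t ω; rw [he]; split <;> norm_num
  -- lower bound on δ'
  have hlb : ∀ t, t₀ ≤ t → ∀ ω, -γ < δ' t ω := by
    intro t ht
    induction t, ht using Nat.le_induction with
    | base => intro ω; rw [hinit]; linarith
    | succ n hn ih =>
      intro ω
      rw [hrec n hn ω]
      rcases lt_or_ge (δ' n ω) 0 with h | h
      · rw [hlow n hn ω h]; have := ih ω; nlinarith
      · have := (heb n ω).2; nlinarith
  -- telescoping
  have htel : ∀ n, ∀ ω,
      δ' (t₀ + n) ω = δ + ∑ t ∈ Finset.Ico t₀ (t₀ + n), γ * (δ - e t ω) := by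
    intro n
    induction n with
    | zero => intro ω; simp [hinit]
    | succ n ih =>
      intro ω
      rw [← add_assoc, hrec (t₀ + n) (Nat.le_add_right _ _) ω, ih ω,
        Finset.sum_Ico_succ_top (Nat.le_add_right _ _)]
      ring
  have hIcc : Finset.Icc t₀ (t₀ + T - 1) = Finset.Ico t₀ (t₀ + T) := by
    ext x
    simp only [Finset.mem_Icc, Finset.mem_Ico]
    omega
  set F := Finset.Ico t₀ (t₀ + T) with hF
  have hcard : (F.card : ℝ) = T := by
    have : F.card = T := by simp [hF]
    exact_mod_cast this
  -- pointwise bound on the sum of e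
  have hsum_e : ∀ ω, ∑ t ∈ F, e t ω ≤ T * δ + (δ + γ) / γ := by
    intro ω
    have h1 := hlb (t₀ + T) (Nat.le_add_right _ _) ω
    have h2 := htel T ω
    have h3 : ∑ t ∈ F, γ * (δ - e t ω)
        = (T : ℝ) * (γ * δ) - γ * ∑ t ∈ F, e t ω := by
      rw [Finset.mul_sum]
      rw [show (fun t => γ * (δ - e t ω)) = fun t => γ * δ - γ * e t ω from
        funext fun t => by ring]
      rw [Finset.sum_sub_distrib, Finset.sum_const, nsmul_eq_mul, hcard]
    have h4 : γ * ((T : ℝ) * δ + (δ + γ) / γ) = (T : ℝ) * (γ * δ) + (δ + γ) := by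
      field_simp
    have h5 : γ * ∑ t ∈ F, e t ω < γ * ((T : ℝ) * δ + (δ + γ) / γ) := by
      rw [h4]; linarith [h2, h1, h3.symm ▸ (h2 ▸ h1)]
    exact le_of_lt ((mul_lt_mul_iff_right₀ hγ).mp h5)
  -- measurability and indicator structure of e
  have hSmeas : ∀ t, MeasurableSet {ω | R t ω > C t ω} := by
    intro t
    have hRt : R t = fun ω => ρhat t ω - ρ t ω := funext (hRdef t)
    have : {ω | R t ω > C t ω} = {ω | C t ω < ρhat t ω - ρ t ω} := by
      ext ω; simp [hRt, gt_iff_lt]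
    rw [this]
    exact measurableSet_lt (hC t) ((hρhat t).sub (hρ t))
  have hind : ∀ t, e t = Set.indicator {ω | R t ω > C t ω} (fun _ => (1 : ℝ)) := by
    intro t; funext ω
    rw [he, Set.indicator_apply]
    simp only [Set.mem_setOf_eq]
  have hint : ∀ t, Integrable (e t) μ := by
    intro t; rw [hind t]
    exact (integrable_const (1 : ℝ)).indicator (hSmeas t)
  have hInt_e : ∀ t, ∫ ω, e t ω ∂μ = (μ {ω | R t ω > C t ω}).toReal := by
    intro t
    rw [hind t, integral_indicator_const (1 : ℝ) (hSmeas t), smul_eq_mul, mul_one, measureReal_def]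
  -- sum of measures bound
  have hsum_meas : ∑ t ∈ F, (μ {ω | R t ω > C t ω}).toReal ≤ T * δ + (δ + γ) / γ := by
    calc ∑ t ∈ F, (μ {ω | R t ω > C t ω}).toReal
        = ∫ ω, ∑ t ∈ F, e t ω ∂μ := by
          rw [integral_finset_sum F (fun t _ => hint t)]
          exact (Finset.sum_congr rfl fun t _ => (hInt_e t).symm)
      _ ≤ ∫ _, ((T : ℝ) * δ + (δ + γ) / γ) ∂μ :=
          integral_mono (integrable_finset_sum F fun t _ => hint t)
            (integrable_const _) hsum_e
      _ = (T : ℝ) * δ + (δ + γ) / γ := by simp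
  -- if e t ω = 0 then safety holds
  have key : ∀ t ∈ F, 1 - (μ {ω | R t ω > C t ω}).toReal ≤ (μ {ω | ρ t ω > 0}).toReal := by
    intro t ht
    have hsub : {ω | R t ω > C t ω}ᶜ ⊆ {ω | ρ t ω > 0} := by
      intro ω hω
      simp only [Set.mem_compl_iff, Set.mem_setOf_eq, not_lt, gt_iff_lt] at hω ⊢
      have hp := hpred t (hIcc ▸ ht) ω
      have hR := hRdef t ω
      linarith
    have h1 : μ {ω | R t ω > C t ω}ᶜ ≤ μ {ω | ρ t ω > 0} := measure_mono hsub
    have h2 : (μ {ω | R t ω > C t ω}ᶜ).toReal = 1 - (μ {ω | R t ω > C t ω}).toReal := by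
      rw [measure_compl (hSmeas t) (measure_ne_top μ _), measure_univ,
        ENNReal.toReal_sub_of_le prob_le_one ENNReal.one_ne_top, ENNReal.toReal_one]
    calc 1 - (μ {ω | R t ω > C t ω}).toReal = (μ {ω | R t ω > C t ω}ᶜ).toReal := h2.symm
      _ ≤ (μ {ω | ρ t ω > 0}).toReal := ENNReal.toReal_mono (measure_ne_top _ _) h1
  -- combine
  have hfin : (T : ℝ) - ((T : ℝ) * δ + (δ + γ) / γ) ≤
      ∑ t ∈ F, (μ {ω | ρ t ω > 0}).toReal := by
    have h1 : ∑ t ∈ F, (1 - (μ {ω | R t ω > C t ω}).toReal)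
        ≤ ∑ t ∈ F, (μ {ω | ρ t ω > 0}).toReal := Finset.sum_le_sum key
    have h2 : ∑ t ∈ F, (1 - (μ {ω | R t ω > C t ω}).toReal)
        = (T : ℝ) - ∑ t ∈ F, (μ {ω | R t ω > C t ω}).toReal := by
      rw [Finset.sum_sub_distrib, Finset.sum_const, nsmul_eq_mul, hcard, mul_one]
    linarith
  rw [hIcc]
  have hmul := mul_le_mul_of_nonneg_left hfin (le_of_lt (by positivity : (0:ℝ) < 1 / T))
  have heq : (1 / (T : ℝ)) * ((T : ℝ) - ((T : ℝ) * δ + (δ + γ) / γ))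
      = 1 - δ - (δ + γ) / ((T : ℝ) * γ) := by
    field_simp
    ring
  linarith
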